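/- Let G be a finite simple graph with n vertices and m edges. Then NK(G^{-+}) = 2^m · (n-1)^n. -/

import Mathlib

open Finset

variable {V : Type*}

/-- The Narumi–Katayama index: the product of the degrees of all vertices. -/
def NK {W : Type*} [Fintype W] (H : SimpleGraph W) [DecidableRel H.Adj] : ℕ :=
  ∏ v, H.degree v

/-- The first Zagreb index: the sum of the squares of the degrees. -/
def M1 [Fintype V] (G : SimpleGraph V) [DecidableRel G.Adj] : ℕ :=
  ∑ v, (G.degree v) ^ 2

/-- The multiplicative sum Zagreb index: the product over the edges of `G` of the
sum of the degrees of the two endpoints. -/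
def Pi1Star [Fintype V] [DecidableEq V] (G : SimpleGraph V) [DecidableRel G.Adj] : ℕ :=
  ∏ e ∈ G.edgeFinset,
    Sym2.lift ⟨fun u v => G.degree u + G.degree v, fun u v => by simp [Nat.add_comm]⟩ e

/-- A generic transformation graph on the vertex set `V(G) ∪ E(G)`, built from a
symmetric irreflexive relation `Rvv` between vertices, a symmetric irreflexive relation
`Ree` between edges, and an incidence relation `Rve` between vertices and edges. -/
def transGraph (G : SimpleGraph V) (Rvv : V → V → Prop) (Ree : Sym2 V → Sym2 V → Prop)
    (Rve : V → Sym2 V → Prop)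
    (hvv : Symmetric Rvv) (hvv' : Irreflexive Rvv)
    (hee : Symmetric Ree) (hee' : Irreflexive Ree) :
    SimpleGraph (V ⊕ G.edgeSet) where
  Adj a b :=
    match a, b with
    | Sum.inl u, Sum.inl v => Rvv u v
    | Sum.inr e, Sum.inr f => Ree e.1 f.1
    | Sum.inl u, Sum.inr e => Rve u e.1
    | Sum.inr e, Sum.inl u => Rve u e.1
  symm := ⟨by
    rintro (u | e) (v | f) h
    · exact hvv h
    · exact h
    · exact h
    · exact hee h⟩
  loopless := ⟨by
    rintro (u | e) h
    · exact hvv' u h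
    · exact hee' e.1 h⟩

instance transGraph.instDecidableAdj (G : SimpleGraph V) (Rvv : V → V → Prop)
    (Ree : Sym2 V → Sym2 V → Prop) (Rve : V → Sym2 V → Prop)
    (h1 : Symmetric Rvv) (h2 : Irreflexive Rvv) (h3 : Symmetric Ree) (h4 : Irreflexive Ree)
    [DecidableRel Rvv] [DecidableRel Ree] [∀ u e, Decidable (Rve u e)] :
    DecidableRel (transGraph G Rvv Ree Rve h1 h2 h3 h4).Adj := fun a b =>
  match a, b with
  | Sum.inl u, Sum.inl v => inferInstanceAs (Decidable (Rvv u v))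
  | Sum.inr e, Sum.inr f => inferInstanceAs (Decidable (Ree e.1 f.1))
  | Sum.inl u, Sum.inr e => inferInstanceAs (Decidable (Rve u e.1))
  | Sum.inr e, Sum.inl u => inferInstanceAs (Decidable (Rve u e.1))

/-- Two edges (as elements of `Sym2 V`) are adjacent: distinct and sharing an endpoint. -/
abbrev shareRel : Sym2 V → Sym2 V → Prop := fun e f => e ≠ f ∧ ∃ w, w ∈ e ∧ w ∈ f

lemma shareRel_symm : Symmetric (shareRel (V := V)) :=
  fun _ _ h => ⟨h.1.symm, h.2.imp fun _ hw => ⟨hw.2, hw.1⟩⟩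

lemma shareRel_irrefl : Irreflexive (shareRel (V := V)) := fun _ h => h.1 rfl

/-- Two edges are "non-adjacent": distinct and sharing no endpoint. -/
abbrev coshareRel : Sym2 V → Sym2 V → Prop := fun e f => e ≠ f ∧ ∀ w, w ∈ e → w ∉ f

lemma coshareRel_symm : Symmetric (coshareRel (V := V)) :=
  fun _ _ h => ⟨h.1.symm, fun w hf he => h.2 w he hf⟩

lemma coshareRel_irrefl : Irreflexive (coshareRel (V := V)) := fun _ h => h.1 rfl

/-- Non-adjacency of distinct vertices. -/
abbrev coAdj (G : SimpleGraph V) : V → V → Prop := fun u v => u ≠ v ∧ ¬ G.Adj u v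

lemma coAdj_symm (G : SimpleGraph V) : Symmetric (coAdj G) :=
  fun _ _ h => ⟨h.1.symm, fun ha => h.2 ha.symm⟩

lemma coAdj_irrefl (G : SimpleGraph V) : Irreflexive (coAdj G) := fun _ h => h.1 rfl

variable [Fintype V] [DecidableEq V]

/-- The transformation graph `G^{-+}`. -/
abbrev Gmp (G : SimpleGraph V) [DecidableRel G.Adj] : SimpleGraph (V ⊕ G.edgeSet) :=
  transGraph G (coAdj G) (fun _ _ => False) (fun u e => u ∈ e)
    (coAdj_symm G) (coAdj_irrefl G) (fun _ _ h => h.elim) (fun _ h => h)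

instance Gmp.instDecidableAdj (G : SimpleGraph V) [DecidableRel G.Adj] :
    DecidableRel (Gmp G).Adj :=
  transGraph.instDecidableAdj _ _ _ _ _ _ _ _

lemma deg_inl_aux (G : SimpleGraph V) [DecidableRel G.Adj] (u : V) :
    (Gmp G).degree (Sum.inl u) = Fintype.card V - 1 := by
  classical
  rw [SimpleGraph.degree, SimpleGraph.neighborFinset_eq_filter, Finset.card_filter,
    Fintype.sum_sum_type]
  have h1 : (∑ v : V, if (Gmp G).Adj (Sum.inl u) (Sum.inl v) then 1 else 0)
      = Fintype.card V - (G.degree u + 1) := by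
    rw [← Finset.card_filter]
    have hfil : (univ.filter fun v => (Gmp G).Adj (Sum.inl u) (Sum.inl v))
        = univ \ insert u (G.neighborFinset u) := by
      ext v
      simp only [mem_filter, mem_univ, true_and, mem_sdiff, mem_insert,
        SimpleGraph.mem_neighborFinset]
      constructor
      · rintro ⟨hne, hadj⟩ (h | h)
        · exact hne (h.symm)
        · exact hadj h
      · intro h
        exact ⟨fun h' => h (Or.inl h'.symm), fun h' => h (Or.inr h')⟩
    rw [hfil, Finset.card_sdiff_of_subset (Finset.subset_univ _), Finset.card_univ,
      Finset.card_insert_of_notMem (by simp), ← SimpleGraph.degree]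
  have h2 : (∑ e : G.edgeSet, if (Gmp G).Adj (Sum.inl u) (Sum.inr e) then 1 else 0)
      = G.degree u := by
    rw [← Finset.card_filter, ← SimpleGraph.card_incidenceFinset_eq_degree]
    refine Finset.card_bij (fun e _ => (e : Sym2 V)) ?_ ?_ ?_
    · intro e he
      rw [SimpleGraph.mem_incidenceFinset]
      exact ⟨e.2, (Finset.mem_filter.1 he).2⟩
    · intro e _ f _ h
      exact Subtype.ext h
    · intro f hf
      rw [SimpleGraph.mem_incidenceFinset] at hf
      exact ⟨⟨f, hf.1⟩, Finset.mem_filter.2 ⟨Finset.mem_univ _, hf.2⟩, rfl⟩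
  rw [h1, h2]
  have hle : G.degree u + 1 ≤ Fintype.card V := by
    have h := Finset.card_le_card (Finset.subset_univ (insert u (G.neighborFinset u)))
    rwa [Finset.card_insert_of_notMem (by simp), Finset.card_univ,
      ← SimpleGraph.degree] at h
  omega

lemma deg_inr_aux (G : SimpleGraph V) [DecidableRel G.Adj] (e : G.edgeSet) :
    (Gmp G).degree (Sum.inr e) = 2 := by
  classical
  rw [SimpleGraph.degree, SimpleGraph.neighborFinset_eq_filter, Finset.card_filter,
    Fintype.sum_sum_type]
  have h2 : (∑ f : G.edgeSet, if (Gmp G).Adj (Sum.inr e) (Sum.inr f) then 1 else 0) = 0 := by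
    apply Finset.sum_eq_zero
    intro f _
    exact if_neg (fun h => h)
  have h1 : (∑ v : V, if (Gmp G).Adj (Sum.inr e) (Sum.inl v) then 1 else 0) = 2 := by
    rw [← Finset.card_filter]
    obtain ⟨s, hs⟩ := e
    induction s using Sym2.ind with
    | _ a b =>
      have hab : a ≠ b := (G.mem_edgeSet.1 hs).ne
      have : (univ.filter fun v =>
          (Gmp G).Adj (Sum.inr ⟨s(a, b), hs⟩) (Sum.inl v)) = {a, b} := by
        ext v
        simp only [mem_filter, mem_univ, true_and, mem_insert, mem_singleton]
        show v ∈ s(a, b) ↔ _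
        rw [Sym2.mem_iff]
      rw [this, Finset.card_insert_of_notMem (by simpa using hab), Finset.card_singleton]
  rw [h1, h2]

theorem stmt_3 (G : SimpleGraph V) [DecidableRel G.Adj] :
    NK (Gmp G) = 2 ^ G.edgeFinset.card * (Fintype.card V - 1) ^ Fintype.card V := by
  classical
  rw [NK, Fintype.prod_sum_type]
  simp only [deg_inl_aux, deg_inr_aux]
  rw [Finset.prod_const, Finset.prod_const, Finset.card_univ, Finset.card_univ,
    SimpleGraph.edgeFinset_card, mul_comm]
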